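/- Let s = a + bi be a complex number with a > 0, and let σ ≥ 0, α ≥ 0 be real. Then the real part of s̃ = s(1 + σ/(α + s)) satisfies Re(s̃) ≥ a > 0. -/
import Mathlib

theorem pml_shift_re_ge (s : ℂ) (σ α : ℝ) (ha : 0 < s.re) (hσ : 0 ≤ σ) (hα : 0 ≤ α) :
    s.re ≤ (s * (1 + (σ : ℂ) / ((α : ℂ) + s))).re ∧ 0 < s.re := by
  refine ⟨?_, ha⟩
  have hd : 0 < (α + s.re) * (α + s.re) + s.im * s.im := by nlinarith
  simp only [Complex.mul_re, Complex.add_re, Complex.add_im, Complex.div_re, Complex.div_im,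
    Complex.one_re, Complex.one_im, Complex.ofReal_re, Complex.ofReal_im, Complex.normSq_apply,
    zero_add, zero_mul, add_zero, zero_div, zero_sub, mul_neg, sub_neg_eq_add]
  rw [mul_add, mul_one]
  have h1 : 0 ≤ s.re * (σ * (α + s.re) / ((α + s.re) * (α + s.re) + s.im * s.im)) := by
    have : 0 < α + s.re := by linarith
    positivity
  have h2 : 0 ≤ s.im * (σ * s.im / ((α + s.re) * (α + s.re) + s.im * s.im)) := by
    have h : s.im * (σ * s.im / ((α + s.re) * (α + s.re) + s.im * s.im))
        = σ * (s.im * s.im) / ((α + s.re) * (α + s.re) + s.im * s.im) := by ring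
    rw [h]; exact div_nonneg (mul_nonneg hσ (mul_self_nonneg s.im)) hd.le
  linarith
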